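/- arXiv:math/0408060 — 2 statements merged into one kernel-verified Lean document; each statement's English description precedes it below -/
import Mathlib

section
/- In the Abelian sandpile model on a finite volume V, the stabilization of an unstable configuration is well defined: any two maximal sequences of legal topplings starting from the same configuration η topple each site the same number of times and result in the same stable configuration. -/
/- The Abelian sandpile model on ℤ^d.  Sites are `Fin d → ℤ`; the toppling matrix is
`Δ_{xx} = 2d`, `Δ_{xy} = -1` for nearest neighbours, `0` otherwise.  Toppling in volume `V`
uses the matrix restricted to `V` (grains leaving `V` disappear).  `LegalSeq V η l η'`
says that `l` is a sequence of legal topplings in `V` taking `η` to `η'`. -/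

open scoped Classical

abbrev Site (d : ℕ) := Fin d → ℤ

def adjacent {d : ℕ} (x y : Site d) : Prop := (∑ i, |x i - y i|) = 1

noncomputable def lap (d : ℕ) (x y : Site d) : ℤ :=
  if x = y then 2 * d else if adjacent x y then -1 else 0

abbrev Config (d : ℕ) := Site d → ℤ

noncomputable def lapV {d : ℕ} (V : Finset (Site d)) (x y : Site d) : ℤ :=
  if x ∈ V ∧ y ∈ V then lap d x y else 0

noncomputable def topple {d : ℕ} (V : Finset (Site d)) (x : Site d) (η : Config d) :
    Config d := fun y => η y - lapV V x y

def Stable {d : ℕ} (V : Finset (Site d)) (η : Config d) : Prop := ∀ x ∈ V, η x ≤ 2 * d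

/-- `l` is a sequence of legal topplings in volume `V` carrying `η` to `η'`. -/
def LegalSeq {d : ℕ} (V : Finset (Site d)) : Config d → List (Site d) → Config d → Prop
  | η, [], η' => η' = η
  | η, x :: l, η' => x ∈ V ∧ (2 * d : ℤ) < η x ∧ LegalSeq V (topple V x η) l η'

noncomputable def addGrain {d : ℕ} (x : Site d) (η : Config d) : Config d :=
  fun y => if y = x then η y + 1 else η y


lemma lapV_nonpos {d : ℕ} (V : Finset (Site d)) {a x : Site d} (h : a ≠ x) :
    lapV V a x ≤ 0 := by
  simp only [lapV, lap, if_neg h]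
  split
  · split <;> norm_num
  · rfl

lemma topple_ge {d : ℕ} (V : Finset (Site d)) {a x : Site d} (h : a ≠ x) (η : Config d) :
    η x ≤ topple V a η x := by
  have := lapV_nonpos V (x := x) h
  simp only [topple]; omega

lemma topple_comm {d : ℕ} (V : Finset (Site d)) (a b : Site d) (η : Config d) :
    topple V a (topple V b η) = topple V b (topple V a η) := by
  funext y; simp only [topple]; ring

lemma ge_of_not_mem {d : ℕ} (V : Finset (Site d)) {x : Site d} :
    ∀ {l : List (Site d)} {η ξ : Config d}, LegalSeq V η l ξ → x ∉ l → η x ≤ ξ x := by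
  intro l
  induction l with
  | nil => intro η ξ h _; rw [h]
  | cons a t ih =>
      intro η ξ h hx
      obtain ⟨_, _, ht⟩ := h
      have hax : a ≠ x := fun e => hx (e ▸ List.mem_cons_self (a := a) (l := t))
      exact le_trans (topple_ge V hax η) (ih ht (fun e => hx (List.mem_cons_of_mem _ e)))

lemma must_topple {d : ℕ} (V : Finset (Site d)) {x : Site d} {l : List (Site d)}
    {η ξ : Config d} (h : LegalSeq V η l ξ) (hξ : Stable V ξ)
    (hx : x ∈ V) (hη : (2 * d : ℤ) < η x) : x ∈ l := by
  by_contra hc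
  have := ge_of_not_mem V h hc
  have := hξ x hx
  omega

lemma move_front {d : ℕ} (V : Finset (Site d)) {x : Site d} :
    ∀ {l : List (Site d)} {η ξ : Config d}, LegalSeq V η l ξ → x ∈ l → x ∈ V →
      (2 * d : ℤ) < η x → LegalSeq V η (x :: l.erase x) ξ := by
  intro l
  induction l with
  | nil => intro _ _ _ hm; exact absurd hm (List.not_mem_nil (a := x))
  | cons a t ih =>
      intro η ξ h hm hxV hηx
      obtain ⟨haV, haη, ht⟩ := h
      by_cases hax : a = x
      · subst hax
        rw [List.erase_cons_head]
        exact ⟨haV, haη, ht⟩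
      · have hmt : x ∈ t := by
          rcases List.mem_cons.1 hm with h1 | h1
          · exact absurd h1.symm hax
          · exact h1
        have hηx' : (2 * d : ℤ) < topple V a η x :=
          lt_of_lt_of_le hηx (topple_ge V hax η)
        have h2 := ih ht hmt hxV hηx'
        obtain ⟨_, _, h3⟩ := h2
        rw [List.erase_cons_tail (by simpa using hax)]
        refine ⟨hxV, hηx, haV, ?_, ?_⟩
        · calc (2 * d : ℤ) < η a := haη
            _ ≤ topple V x η a := topple_ge V (Ne.symm hax) η
        · rw [topple_comm]; exact h3

/-- the stabilization of a configuration in a finite volume is well defined: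
any two maximal sequences of legal topplings starting from the same configuration `η`
topple each site the same number of times and end in the same stable configuration. -/
theorem stabilization_well_defined
    {d : ℕ} (V : Finset (Site d)) (η : Config d)
    (l l' : List (Site d)) (ξ ξ' : Config d)
    (hl : LegalSeq V η l ξ) (hξ : Stable V ξ)
    (hl' : LegalSeq V η l' ξ') (hξ' : Stable V ξ') :
    (∀ y, l.count y = l'.count y) ∧ ξ = ξ' := by
  induction l generalizing η l' with
  | nil =>
      cases hl
      cases l' with
      | nil => cases hl'; exact ⟨fun y => rfl, rfl⟩
      | cons a t =>
          obtain ⟨haV, haη, _⟩ := hl'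
          exact absurd (hξ a haV) (by omega)
  | cons x t ih =>
      obtain ⟨hxV, hηx, ht⟩ := hl
      have hxl' : x ∈ l' := must_topple V hl' hξ' hxV hηx
      obtain ⟨_, _, h3⟩ := move_front V hl' hxl' hxV hηx
      obtain ⟨hcount, heq⟩ := ih _ _ ht h3
      refine ⟨fun y => ?_, heq⟩
      have h4 := hcount y
      have h5 := List.count_erase (a := y) (b := x) (l := l')
      have hpos : 0 < l'.count x := List.count_pos_iff.2 hxl'
      simp only [List.count_cons, beq_iff_eq] at h4 h5 hpos ⊢
      by_cases hyx : x = y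
      · subst hyx
        simp only [if_pos rfl, ite_true] at h5 ⊢
        omega
      · simp only [if_neg hyx] at h5 ⊢
        omega
end

section
/- The number of recurrent configurations of the Abelian sandpile model on a finite set V ⊂ Z^d equals det(Δ_V), the determinant of the toppling matrix restricted to V. -/
/- The Abelian sandpile model on ℤ^d.  Sites are `Fin d → ℤ`; the toppling matrix is
`Δ_{xx} = 2d`, `Δ_{xy} = -1` for nearest neighbours, `0` otherwise.  Toppling in volume `V`
uses the matrix restricted to `V` (grains leaving `V` disappear).  `LegalSeq V η l η'`
says that `l` is a sequence of legal topplings in `V` taking `η` to `η'`. -/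

open scoped Classical

/-- The height (in `{1,…,2d}`) of a configuration encoded with values in `Fin (2d)`. -/
def heightOf {d : ℕ} {V : Finset (Site d)} (η : {x // x ∈ V} → Fin (2 * d))
    (z : {x // x ∈ V}) : ℤ := (η z : ℤ) + 1

/-- A configuration on `V` is recurrent iff it contains no forbidden subconfiguration:
there is no nonempty `S ⊆ V` with `η(x) ≤ -∑_{y ∈ S∖{x}} Δ_{xy}` for all `x ∈ S`. -/
def RecurrentOn {d : ℕ} (V : Finset (Site d)) (η : {x // x ∈ V} → Fin (2 * d)) : Prop :=
  ∀ S : Finset {x // x ∈ V}, S.Nonempty →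
    ∃ x ∈ S, ¬ (heightOf η x ≤ -∑ y ∈ S.erase x, lap d x.1 y.1)

/-- The toppling matrix restricted to `V`. -/
noncomputable def lapMat {d : ℕ} (V : Finset (Site d)) :
    Matrix {x // x ∈ V} {x // x ∈ V} ℤ := fun a b => lap d a.1 b.1

section Basics
variable {d : ℕ}

lemma adj_symm {x y : Site d} (h : adjacent x y) : adjacent y x := by
  unfold adjacent at *
  simpa [abs_sub_comm] using h

lemma not_adj_self (x : Site d) : ¬ adjacent x x := by
  simp [adjacent]

lemma lap_diag (x : Site d) : lap d x x = 2 * d := by simp [lap]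

lemma lap_symm (x y : Site d) : lap d x y = lap d y x := by
  unfold lap
  rcases eq_or_ne x y with rfl | h
  · simp
  · rw [if_neg h, if_neg (Ne.symm h)]
    by_cases hadj : adjacent x y
    · rw [if_pos hadj, if_pos (adj_symm hadj)]
    · rw [if_neg hadj, if_neg (fun hc => hadj (adj_symm hc))]

lemma lap_offdiag {x y : Site d} (h : x ≠ y) :
    lap d x y = if adjacent x y then -1 else 0 := by simp [lap, h]

lemma lap_offdiag_nonpos {x y : Site d} (h : x ≠ y) : lap d x y ≤ 0 := by
  rw [lap_offdiag h]; split <;> omega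

/-- The `2d` lattice neighbours of a point, parametrized by coordinate and sign. -/
noncomputable def nbr (x : Site d) (p : Fin d × Bool) : Site d :=
  Function.update x p.1 (x p.1 + (if p.2 then 1 else -1))

lemma nbr_inj (x : Site d) : Function.Injective (nbr x) := by
  rintro ⟨i, b⟩ ⟨j, c⟩ h
  by_cases hij : i = j
  · subst hij
    have := congrFun h i
    simp only [nbr, Function.update_self] at this
    have : (if b then (1:ℤ) else -1) = (if c then 1 else -1) := by omega
    rcases b <;> rcases c <;> simp_all <;> omega
  · have h1 := congrFun h i
    have h2 := congrFun h j
    simp only [nbr, Function.update_self, Function.update_of_ne (Ne.symm hij),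
      Function.update_of_ne hij] at h1 h2
    exfalso
    rcases b <;> simp at h1 <;> omega

lemma adjacent_iff_nbr (x y : Site d) : adjacent x y ↔ ∃ p, nbr x p = y := by
  constructor
  · intro h
    unfold adjacent at h
    -- there is a unique coordinate where they differ, by 1
    have hnn : ∀ i, 0 ≤ |x i - y i| := fun i => abs_nonneg _
    have hex : ∃ i, 1 ≤ |x i - y i| := by
      by_contra hc
      push_neg at hc
      have : (∑ i, |x i - y i|) ≤ 0 := Finset.sum_nonpos (fun i _ => by have := hc i; omega)
      omega
    obtain ⟨i, hi⟩ := hex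
    have hrest : ∀ j, j ≠ i → x j = y j := by
      intro j hj
      have hsplit : (∑ k, |x k - y k|) = |x i - y i| + ∑ k ∈ Finset.univ.erase i, |x k - y k| :=
        (Finset.add_sum_erase _ _ (Finset.mem_univ i)).symm
      have hsum0 : ∑ k ∈ Finset.univ.erase i, |x k - y k| ≤ 0 := by omega
      have hj0 : |x j - y j| ≤ 0 := by
        have hmem : j ∈ Finset.univ.erase i := Finset.mem_erase.mpr ⟨hj, Finset.mem_univ j⟩
        have h5 := Finset.single_le_sum (f := fun k => |x k - y k|) (fun k _ => abs_nonneg _) hmem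
        omega
      have := abs_nonneg (x j - y j)
      have : |x j - y j| = 0 := le_antisymm hj0 this
      have := abs_eq_zero.mp this
      omega
    have hii : |x i - y i| = 1 := by
      have hsplit : (∑ k, |x k - y k|) = |x i - y i| + ∑ k ∈ Finset.univ.erase i, |x k - y k| :=
        (Finset.add_sum_erase _ _ (Finset.mem_univ i)).symm
      have : ∑ k ∈ Finset.univ.erase i, |x k - y k| = 0 := by
        apply Finset.sum_eq_zero
        intro j hj
        rw [abs_eq_zero]
        have := hrest j (Finset.mem_erase.mp hj).1
        omega
      omega
    have : y i = x i + 1 ∨ y i = x i - 1 := by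
      rcases abs_eq (by norm_num : (0:ℤ) ≤ 1) |>.mp hii with h' | h' <;> omega
    rcases this with h' | h'
    · exact ⟨⟨i, true⟩, funext fun j => by
        by_cases hji : j = i
        · subst hji; simp [nbr]; omega
        · simp [nbr, Function.update_of_ne hji, hrest j hji]⟩
    · exact ⟨⟨i, false⟩, funext fun j => by
        by_cases hji : j = i
        · subst hji; simp [nbr]; omega
        · simp [nbr, Function.update_of_ne hji, hrest j hji]⟩
  · rintro ⟨⟨i, b⟩, rfl⟩
    unfold adjacent
    have : ∀ j, |x j - nbr x ⟨i, b⟩ j| = if j = i then 1 else 0 := by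
      intro j
      by_cases hji : j = i
      · subst hji; simp [nbr]; rcases b <;> simp
      · simp [nbr, Function.update_of_ne hji, hji]
    rw [Finset.sum_congr rfl (fun j _ => this j)]
    simp

end Basics

section SumLemmas
variable {d : ℕ}

lemma sum_neg_lap_le (x : Site d) (T : Finset (Site d)) (hx : x ∉ T) :
    ∑ y ∈ T, (-lap d x y) ≤ 2 * d := by
  have h1 : ∀ y ∈ T, -lap d x y = if adjacent x y then 1 else 0 := by
    intro y hy
    have hxy : x ≠ y := fun h => hx (h ▸ hy)
    rw [lap_offdiag hxy]
    split <;> ring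
  rw [Finset.sum_congr rfl h1, ← Finset.sum_filter]
  simp only [Finset.sum_const, nsmul_eq_mul, mul_one]
  have hsub : T.filter (fun y => adjacent x y) ⊆ Finset.image (nbr x) Finset.univ := by
    intro y hy
    obtain ⟨p, hp⟩ := (adjacent_iff_nbr x y).mp (Finset.mem_filter.mp hy).2
    exact Finset.mem_image.mpr ⟨p, Finset.mem_univ p, hp⟩
  have hcard : (T.filter (fun y => adjacent x y)).card ≤ 2 * d := by
    calc (T.filter (fun y => adjacent x y)).card
        ≤ (Finset.image (nbr x) Finset.univ).card := Finset.card_le_card hsub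
      _ ≤ (Finset.univ : Finset (Fin d × Bool)).card := Finset.card_image_le
      _ = 2 * d := by simp [Finset.card_univ]; omega
  exact_mod_cast Nat.cast_le.mpr hcard

noncomputable def sqn {d : ℕ} (z : Site d) : ℤ := ∑ i, (z i)^2

lemma sqn_nonneg (z : Site d) : 0 ≤ sqn z :=
  Finset.sum_nonneg fun i _ => sq_nonneg _

lemma single_le_sqn (z : Site d) (i : Fin d) : (z i)^2 ≤ sqn z :=
  Finset.single_le_sum (f := fun j => (z j)^2) (fun j _ => sq_nonneg _) (Finset.mem_univ i)

lemma sqn_nbr (x : Site d) (p : Fin d × Bool) :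
    sqn (nbr x p) = sqn x + 2 * (if p.2 then 1 else -1) * (x p.1) + 1 := by
  obtain ⟨i, b⟩ := p
  dsimp only
  have hdiff : sqn (nbr x ⟨i, b⟩) - sqn x = ∑ j, ((nbr x ⟨i, b⟩ j)^2 - (x j)^2) := by
    unfold sqn
    rw [Finset.sum_sub_distrib]
  have hsingle : ∑ j, ((nbr x ⟨i, b⟩ j)^2 - (x j)^2)
      = (nbr x ⟨i, b⟩ i)^2 - (x i)^2 := by
    apply Finset.sum_eq_single
    · intro j _ hj
      simp [nbr, Function.update_of_ne hj]
    · intro h; exact absurd (Finset.mem_univ i) h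
  have hval : nbr x ⟨i, b⟩ i = x i + (if b then 1 else -1) := by
    simp [nbr]
  have hb : ((if b then (1:ℤ) else -1))^2 = 1 := by rcases b <;> norm_num
  have hsq : (nbr x ⟨i, b⟩ i)^2 = (x i)^2 + 2 * (if b then 1 else -1) * (x i) + 1 := by
    rw [hval, add_sq, hb]; ring
  linarith [hdiff, hsingle, hsq]

lemma sum_sqn_nbr (x : Site d) :
    ∑ p : Fin d × Bool, sqn (nbr x p) = 2 * d * sqn x + 2 * d := by
  rw [Finset.sum_congr rfl (fun p _ => sqn_nbr x p), Fintype.sum_prod_type]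
  have h2 : ∀ i : Fin d, ∑ b : Bool, (sqn x + 2 * (if b then 1 else -1) * (x i) + 1)
      = 2 * sqn x + 2 := by
    intro i
    rw [Fintype.sum_bool]
    norm_num
    ring
  rw [Finset.sum_congr rfl (fun i _ => h2 i), Finset.sum_const, Finset.card_univ,
    Fintype.card_fin, nsmul_eq_mul]
  push_cast
  ring

lemma exists_u (V : Finset (Site d)) (hV : V.Nonempty) :
    ∃ u : Site d → ℤ, (∀ x ∈ V, 1 ≤ u x) ∧
      (∀ x ∈ V, (2 * d : ℤ) ≤ ∑ y ∈ V, lap d x y * u y) := by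
  obtain ⟨B, hB, hB0⟩ : ∃ B : ℤ, (∀ x ∈ V, sqn x ≤ B) ∧ 0 ≤ B := by
    refine ⟨V.sup' hV sqn, fun x hx => Finset.le_sup' sqn hx, ?_⟩
    obtain ⟨x, hx⟩ := hV
    exact le_trans (sqn_nonneg x) (Finset.le_sup' sqn hx)
  refine ⟨fun z => 3 * B + 4 - sqn z, ?_, ?_⟩
  · intro x hx
    have := hB x hx
    dsimp only
    omega
  intro x hx
  set u : Site d → ℤ := fun z => 3 * B + 4 - sqn z with hudef
  have huz : ∀ z, u z = 3 * B + 4 - sqn z := fun z => rfl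
  have hun : ∀ p, 1 ≤ u (nbr x p) := by
    intro p
    have h1 : sqn (nbr x p) = sqn x + 2 * (if p.2 then 1 else -1) * (x p.1) + 1 := sqn_nbr x p
    have h2 : 2 * (if p.2 then (1:ℤ) else -1) * (x p.1) ≤ 2 * |x p.1| := by
      rcases hb : p.2 <;> simp [hb]
      · linarith [neg_abs_le (x p.1)]
      · linarith [le_abs_self (x p.1)]
    have h3 : 2 * |x p.1| ≤ (x p.1)^2 + 1 := by
      nlinarith [sq_nonneg (|x p.1| - 1), sq_abs (x p.1), abs_nonneg (x p.1)]
    have h4 := single_le_sqn x p.1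
    have h5 := hB x hx
    rw [huz]
    linarith
  have hsplit : ∑ y ∈ V, lap d x y * u y
      = lap d x x * u x + ∑ y ∈ V.erase x, lap d x y * u y :=
    (Finset.add_sum_erase _ _ hx).symm
  have hterm : ∀ y ∈ V.erase x, lap d x y * u y = -(if adjacent x y then u y else 0) := by
    intro y hy
    have hxy : x ≠ y := Ne.symm (Finset.mem_erase.mp hy).1
    rw [lap_offdiag hxy]
    split <;> ring
  have hstep : ∑ y ∈ V.erase x, lap d x y * u y
      = -∑ y ∈ (V.erase x).filter (fun y => adjacent x y), u y := by
    rw [Finset.sum_congr rfl hterm, Finset.sum_neg_distrib, Finset.sum_filter]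
  have hsub : (V.erase x).filter (fun y => adjacent x y) ⊆ Finset.image (nbr x) Finset.univ := by
    intro y hy
    obtain ⟨p, hp⟩ := (adjacent_iff_nbr x y).mp (Finset.mem_filter.mp hy).2
    exact Finset.mem_image.mpr ⟨p, Finset.mem_univ p, hp⟩
  have himg : ∑ y ∈ Finset.image (nbr x) Finset.univ, u y = ∑ p : Fin d × Bool, u (nbr x p) :=
    Finset.sum_image (fun p _ q _ h => nbr_inj x h)
  have hmono : ∑ y ∈ (V.erase x).filter (fun y => adjacent x y), u y
      ≤ ∑ p : Fin d × Bool, u (nbr x p) := by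
    rw [← himg]
    apply Finset.sum_le_sum_of_subset_of_nonneg hsub
    intro y hy _
    obtain ⟨p, _, hp⟩ := Finset.mem_image.mp hy
    have := hp ▸ hun p
    omega
  have htot : ∑ p : Fin d × Bool, u (nbr x p) = 2 * d * (3 * B + 4) - (2 * d * sqn x + 2 * d) := by
    have : ∀ p : Fin d × Bool, u (nbr x p) = 3 * B + 4 - sqn (nbr x p) := fun p => rfl
    rw [Finset.sum_congr rfl (fun p _ => this p), Finset.sum_sub_distrib, sum_sqn_nbr,
      Finset.sum_const, Finset.card_univ]
    have hc : Fintype.card (Fin d × Bool) = 2 * d := by simp; omega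
    rw [hc, nsmul_eq_mul]
    push_cast
    ring
  have hdiag : lap d x x * u x = 2 * d * (3 * B + 4 - sqn x) := by
    rw [lap_diag, huz]
  linarith [hsplit, hstep, hmono, htot, hdiag]

end SumLemmas

section Dynamics
variable {d : ℕ} {V : Finset (Site d)}

/-- Stability for integer configurations indexed by the subtype. -/
def StableI {d : ℕ} (V : Finset (Site d)) (η : {x // x ∈ V} → ℤ) : Prop :=
  ∀ a, η a ≤ 2 * d

noncomputable def tp {d : ℕ} (V : Finset (Site d)) (x : {x // x ∈ V})
    (η : {x // x ∈ V} → ℤ) : {x // x ∈ V} → ℤ := fun b => η b - lapMat V x b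

def LSI {d : ℕ} (V : Finset (Site d)) :
    ({x // x ∈ V} → ℤ) → List {x // x ∈ V} → ({x // x ∈ V} → ℤ) → Prop
  | η, [], ξ => ξ = η
  | η, x :: l, ξ => (2 * d : ℤ) < η x ∧ LSI V (tp V x η) l ξ

def NoFSC {d : ℕ} (V : Finset (Site d)) (η : {x // x ∈ V} → ℤ) : Prop :=
  ∀ S : Finset {x // x ∈ V}, S.Nonempty →
    ∃ x ∈ S, ¬ (η x ≤ -∑ y ∈ S.erase x, lap d x.1 y.1)

/-- Occurrence count of a site in a toppling sequence. -/
def cnt {d : ℕ} {V : Finset (Site d)} : List {x // x ∈ V} → {x // x ∈ V} → ℤ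
  | [], _ => 0
  | x :: l, a => cnt l a + (if a = x then 1 else 0)

lemma cnt_nonneg (l : List {x // x ∈ V}) (a : {x // x ∈ V}) : 0 ≤ cnt l a := by
  induction l with
  | nil => simp [cnt]
  | cons x l ih => simp only [cnt]; split <;> omega

lemma lapMat_apply (a b : {x // x ∈ V}) : lapMat V a b = lap d a.1 b.1 := rfl

lemma lapMat_diag (a : {x // x ∈ V}) : lapMat V a a = 2 * d := lap_diag a.1

lemma lapMat_symm (a b : {x // x ∈ V}) : lapMat V a b = lapMat V b a := lap_symm a.1 b.1

lemma lapMat_offdiag_nonpos {a b : {x // x ∈ V}} (h : a ≠ b) : lapMat V a b ≤ 0 :=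
  lap_offdiag_nonpos (fun hc => h (Subtype.ext hc))

lemma sum_neg_lapMat_le (a : {x // x ∈ V}) (T : Finset {x // x ∈ V}) (ha : a ∉ T) :
    ∑ b ∈ T, (-lapMat V a b) ≤ 2 * d := by
  have himg : ∑ b ∈ T, (-lapMat V a b) = ∑ y ∈ T.image Subtype.val, (-lap d a.1 y) := by
    rw [Finset.sum_image (fun p _ q _ h => Subtype.coe_injective h)]
    rfl
  rw [himg]
  apply sum_neg_lap_le
  intro hc
  obtain ⟨b, hb, hb'⟩ := Finset.mem_image.mp hc
  exact ha ((Subtype.ext hb' : b = a) ▸ hb)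

lemma sum_ite_mul_lapMat (x : {x // x ∈ V}) (b : {x // x ∈ V}) :
    ∑ a, (if a = x then (1:ℤ) else 0) * lapMat V a b = lapMat V x b := by
  have : ∀ a, (if a = x then (1:ℤ) else 0) * lapMat V a b
      = if a = x then lapMat V a b else 0 := by
    intro a; split <;> ring
  rw [Finset.sum_congr rfl (fun a _ => this a), Finset.sum_ite_eq' Finset.univ x _]
  simp

lemma LSI_count {η ξ : {x // x ∈ V} → ℤ} {l : List {x // x ∈ V}} (h : LSI V η l ξ) :
    ∀ b, ξ b = η b - ∑ a, cnt l a * lapMat V a b := by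
  induction l generalizing η with
  | nil => intro b; simp [cnt, LSI] at h ⊢; simp [h]
  | cons x l ih =>
    obtain ⟨hx, hrest⟩ := h
    intro b
    have hb := ih hrest b
    have hsum : ∑ a, cnt (x :: l) a * lapMat V a b
        = (∑ a, cnt l a * lapMat V a b) + lapMat V x b := by
      have : ∀ a, cnt (x :: l) a * lapMat V a b
          = cnt l a * lapMat V a b + (if a = x then (1:ℤ) else 0) * lapMat V a b := by
        intro a; simp only [cnt]; ring
      rw [Finset.sum_congr rfl (fun a _ => this a), Finset.sum_add_distrib,
        sum_ite_mul_lapMat]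
    rw [hsum]
    have : tp V x η b = η b - lapMat V x b := rfl
    omega

lemma LSI_lb {L : ℤ} (hL : L ≤ 1) {η ξ : {x // x ∈ V} → ℤ} {l : List {x // x ∈ V}}
    (h : LSI V η l ξ) (hlb : ∀ a, L ≤ η a) : ∀ a, L ≤ ξ a := by
  induction l generalizing η with
  | nil =>
    intro a
    have hh : ξ = η := h
    rw [hh]; exact hlb a
  | cons x l ih =>
    obtain ⟨hx, hrest⟩ := h
    apply ih hrest
    intro a
    by_cases hax : a = x
    · subst hax
      have : tp V a η a = η a - 2 * d := by rw [tp, lapMat_diag]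
      omega
    · have h1 : lapMat V x a ≤ 0 := lapMat_offdiag_nonpos (Ne.symm hax)
      have : tp V x η a = η a - lapMat V x a := rfl
      have := hlb a
      omega

/-- The Least Action Principle. -/
lemma LSI_LAP {η ξ : {x // x ∈ V} → ℤ} {l : List {x // x ∈ V}} {m : {x // x ∈ V} → ℤ}
    (hm : ∀ a, 0 ≤ m a) (hst : StableI V (fun b => η b - ∑ a, m a * lapMat V a b))
    (h : LSI V η l ξ) : ∀ a, cnt l a ≤ m a := by
  induction l generalizing η m with
  | nil => intro a; simp [cnt]; exact hm a
  | cons x l ih =>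
    obtain ⟨hx, hrest⟩ := h
    have hmx : 1 ≤ m x := by
      by_contra h0
      push_neg at h0
      have hmx0 : m x ≤ 0 := by omega
      have hstx : η x - ∑ a, m a * lapMat V a x ≤ 2 * d := hst x
      have hsplit : ∑ a, m a * lapMat V a x
          = m x * lapMat V x x + ∑ a ∈ Finset.univ.erase x, m a * lapMat V a x :=
        (Finset.add_sum_erase _ _ (Finset.mem_univ x)).symm
      have h1 : m x * lapMat V x x ≤ 0 := by
        rw [lapMat_diag]
        have : (0:ℤ) ≤ 2 * d := by positivity
        exact mul_nonpos_of_nonpos_of_nonneg hmx0 this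
      have h2 : ∑ a ∈ Finset.univ.erase x, m a * lapMat V a x ≤ 0 := by
        apply Finset.sum_nonpos
        intro a ha
        exact mul_nonpos_of_nonneg_of_nonpos (hm a)
          (lapMat_offdiag_nonpos (Finset.mem_erase.mp ha).1)
      linarith
    set m' : {x // x ∈ V} → ℤ := fun a => m a - (if a = x then 1 else 0) with hm'def
    have hm' : ∀ a, 0 ≤ m' a := by
      intro a
      simp only [hm'def]
      split
      · rename_i hax; subst hax; omega
      · have := hm a; omega
    have hsum' : ∀ b, ∑ a, m' a * lapMat V a b = (∑ a, m a * lapMat V a b) - lapMat V x b := by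
      intro b
      have : ∀ a, m' a * lapMat V a b
          = m a * lapMat V a b - (if a = x then (1:ℤ) else 0) * lapMat V a b := by
        intro a; simp only [hm'def]; ring
      rw [Finset.sum_congr rfl (fun a _ => this a), Finset.sum_sub_distrib,
        sum_ite_mul_lapMat]
    have hst' : StableI V (fun b => tp V x η b - ∑ a, m' a * lapMat V a b) := by
      intro b
      have h3 := hst b
      simp only at h3 ⊢
      rw [hsum']
      have : tp V x η b = η b - lapMat V x b := rfl
      omega
    have hcnt := ih hm' hst' hrest
    intro a
    have h6 := hcnt a
    by_cases hax : a = x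
    · subst hax
      simp only [cnt, hm'def, if_pos rfl] at h6 ⊢
      omega
    · simp only [cnt, hm'def, if_neg hax] at h6 ⊢
      omega

end Dynamics

section FSC
variable {d : ℕ} {V : Finset (Site d)}

lemma nofsc_big {η : {x // x ∈ V} → ℤ} (h : ∀ a, (2 * d : ℤ) < η a) : NoFSC V η := by
  intro S hS
  obtain ⟨x, hx⟩ := hS
  refine ⟨x, hx, ?_⟩
  have hbd : -∑ y ∈ S.erase x, lap d x.1 y.1 ≤ 2 * d := by
    have := sum_neg_lapMat_le x (S.erase x) (Finset.notMem_erase x S)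
    rw [← Finset.sum_neg_distrib]
    exact this
  have := h x
  omega

lemma nofsc_tp {η : {x // x ∈ V} → ℤ} {x : {x // x ∈ V}} (hη : NoFSC V η)
    (hx : (2 * d : ℤ) < η x) : NoFSC V (tp V x η) := by
  intro S hS
  by_cases hxS : x ∈ S
  · by_cases hSx : (S.erase x).Nonempty
    · obtain ⟨x', hx'mem, hx'⟩ := hη (S.erase x) hSx
      have hx'S : x' ∈ S := Finset.mem_of_mem_erase hx'mem
      have hxx' : x ≠ x' := fun h => (Finset.mem_erase.mp hx'mem).1 h.symm
      refine ⟨x', hx'S, ?_⟩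
      have htp : tp V x η x' = η x' - lap d x.1 x'.1 := rfl
      have hxmem : x ∈ S.erase x' := Finset.mem_erase.mpr ⟨hxx', hxS⟩
      have hsum : ∑ y ∈ S.erase x', lap d x'.1 y.1
          = lap d x'.1 x.1 + ∑ y ∈ (S.erase x').erase x, lap d x'.1 y.1 :=
        (Finset.add_sum_erase _ _ hxmem).symm
      have hcomm : (S.erase x').erase x = (S.erase x).erase x' := Finset.erase_right_comm
      rw [hcomm] at hsum
      have hls : lap d x.1 x'.1 = lap d x'.1 x.1 := lap_symm _ _
      intro hcon
      apply hx'
      rw [htp] at hcon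
      omega
    · -- S = {x}
      refine ⟨x, hxS, ?_⟩
      rw [Finset.not_nonempty_iff_eq_empty] at hSx
      rw [hSx]
      have htp : tp V x η x = η x - 2 * d := by rw [tp, lapMat_diag]
      simp only [Finset.sum_empty, neg_zero]
      omega
  · obtain ⟨x', hx'S, hx'⟩ := hη S hS
    refine ⟨x', hx'S, ?_⟩
    have hxx' : x ≠ x' := fun h => hxS (h ▸ hx'S)
    have h1 : lapMat V x x' ≤ 0 := lapMat_offdiag_nonpos hxx'
    have htp : tp V x η x' = η x' - lapMat V x x' := rfl
    omega

lemma nofsc_LSI {η ξ : {x // x ∈ V} → ℤ} {l : List {x // x ∈ V}}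
    (h : LSI V η l ξ) (hη : NoFSC V η) : NoFSC V ξ := by
  induction l generalizing η with
  | nil => have hh : ξ = η := h; rwa [hh]
  | cons x l ih =>
    obtain ⟨hx, hrest⟩ := h
    exact ih hrest (nofsc_tp hη hx)

/-- Termination: every configuration can be stabilized by legal topplings. -/
lemma LSI_exists_stable (u : {x // x ∈ V} → ℤ) (hu1 : ∀ b, 1 ≤ u b)
    (hu2 : ∀ a, (1 : ℤ) ≤ ∑ b, lapMat V a b * u b) (η : {x // x ∈ V} → ℤ) :
    ∃ l ξ, LSI V η l ξ ∧ StableI V ξ := by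
  cases isEmpty_or_nonempty {x // x ∈ V} with
  | inl hemp =>
    exact ⟨[], η, rfl, fun a => absurd (Finset.mem_univ a) (by simp [Finset.univ_eq_empty])⟩
  | inr hne =>
    set L : ℤ := min 1 (Finset.univ.inf' (Finset.univ_nonempty) η) with hLdef
    have hL1 : L ≤ 1 := min_le_left _ _
    have hLη : ∀ a, L ≤ η a := fun a =>
      le_trans (min_le_right _ _) (Finset.inf'_le η (Finset.mem_univ a))
    set Wb : ℤ := ∑ a, L * u a with hWbdef
    have hWlb : ∀ ζ : {x // x ∈ V} → ℤ, (∀ a, L ≤ ζ a) → Wb ≤ ∑ a, ζ a * u a := by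
      intro ζ hζ
      apply Finset.sum_le_sum
      intro a _
      exact mul_le_mul_of_nonneg_right (hζ a) (by linarith [hu1 a])
    have hWstep : ∀ (ζ : {x // x ∈ V} → ℤ) (x : {x // x ∈ V}),
        ∑ a, tp V x ζ a * u a = (∑ a, ζ a * u a) - ∑ b, lapMat V x b * u b := by
      intro ζ x
      have : ∀ a, tp V x ζ a * u a = ζ a * u a - lapMat V x a * u a := by
        intro a
        have : tp V x ζ a = ζ a - lapMat V x a := rfl
        rw [this]; ring
      rw [Finset.sum_congr rfl (fun a _ => this a), Finset.sum_sub_distrib]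
    have hlbpres : ∀ (ζ : {x // x ∈ V} → ℤ) (x : {x // x ∈ V}), (2 * d : ℤ) < ζ x →
        (∀ a, L ≤ ζ a) → ∀ a, L ≤ tp V x ζ a := by
      intro ζ x hx hζ a
      by_cases hax : a = x
      · subst hax
        have : tp V a ζ a = ζ a - 2 * d := by rw [tp, lapMat_diag]
        omega
      · have h1 : lapMat V x a ≤ 0 := lapMat_offdiag_nonpos (Ne.symm hax)
        have : tp V x ζ a = ζ a - lapMat V x a := rfl
        have := hζ a
        omega
    have key : ∀ (N : ℕ) (ζ : {x // x ∈ V} → ℤ), (∀ a, L ≤ ζ a) →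
        (∑ a, ζ a * u a) - Wb ≤ N → ∃ l ξ, LSI V ζ l ξ ∧ StableI V ξ := by
      intro N
      induction N with
      | zero =>
        intro ζ hζ hW
        by_cases hstable : StableI V ζ
        · exact ⟨[], ζ, rfl, hstable⟩
        · exfalso
          rw [StableI] at hstable
          push_neg at hstable
          obtain ⟨x, hx⟩ := hstable
          have h1 := hWstep ζ x
          have h2 := hWlb (tp V x ζ) (hlbpres ζ x hx hζ)
          have h3 := hu2 x
          simp only [Nat.cast_zero] at hW
          linarith
      | succ N ih =>
        intro ζ hζ hW
        by_cases hstable : StableI V ζ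
        · exact ⟨[], ζ, rfl, hstable⟩
        · rw [StableI] at hstable
          push_neg at hstable
          obtain ⟨x, hx⟩ := hstable
          obtain ⟨l, ξ, hl, hs⟩ := ih (tp V x ζ) (hlbpres ζ x hx hζ) (by
            have h1 := hWstep ζ x
            have h3 := hu2 x
            push_cast at hW ⊢
            linarith)
          exact ⟨x :: l, ξ, ⟨hx, hl⟩, hs⟩
    exact key ((∑ a, η a * u a) - Wb).toNat η hLη (Int.self_le_toNat _)

end FSC

section Unstable
variable {d : ℕ} {V : Finset (Site d)}

lemma unstable_add {η : {x // x ∈ V} → ℤ} (hη : NoFSC V η)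
    {w : {x // x ∈ V} → ℤ} (hw : ∀ a, 0 ≤ w a) (hw0 : ∃ a, w a ≠ 0) :
    ¬ StableI V (fun b => η b + ∑ a, w a * lapMat V a b) := by
  obtain ⟨a₀, ha₀⟩ := hw0
  haveI hne : Nonempty {x // x ∈ V} := ⟨a₀⟩
  set m : ℤ := Finset.univ.sup' Finset.univ_nonempty w with hmdef
  have hmw : ∀ a, w a ≤ m := fun a => Finset.le_sup' w (Finset.mem_univ a)
  have hm1 : 1 ≤ m := le_trans (by have := hw a₀; omega) (hmw a₀)
  set S : Finset {x // x ∈ V} := Finset.univ.filter (fun a => w a = m) with hSdef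
  have hSne : S.Nonempty := by
    obtain ⟨i, _, hi⟩ := Finset.exists_mem_eq_sup' Finset.univ_nonempty w
    exact ⟨i, Finset.mem_filter.mpr ⟨Finset.mem_univ i, hi.symm⟩⟩
  obtain ⟨x, hxS, hx⟩ := hη S hSne
  have hwx : w x = m := (Finset.mem_filter.mp hxS).2
  intro hstab
  have hsx : η x + ∑ a, w a * lapMat V a x ≤ 2 * d := hstab x
  -- the quantities involved
  set P : ℤ := ∑ y ∈ S.erase x, (-lapMat V x y) with hPdef
  have hP : ¬ (η x ≤ P) := by
    have h0 : ∑ y ∈ S.erase x, -lapMat V x y = -∑ y ∈ S.erase x, lap d x.1 y.1 :=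
      Finset.sum_neg_distrib _
    rw [hPdef, h0]
    exact hx
  set Qs : ℤ := ∑ a ∈ (Finset.univ.erase x) \ (S.erase x), (-lapMat V a x) with hQdef
  have hQ0 : 0 ≤ Qs := Finset.sum_nonneg (fun a ha => by
    have hax : a ≠ x := (Finset.mem_erase.mp (Finset.mem_sdiff.mp ha).1).1
    have := lapMat_offdiag_nonpos (V := V) hax
    omega)
  have hsubset : S.erase x ⊆ Finset.univ.erase x := fun a ha =>
    Finset.mem_erase.mpr ⟨(Finset.mem_erase.mp ha).1, Finset.mem_univ a⟩
  -- P as a sum over the rows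
  have hPalt : P = ∑ a ∈ S.erase x, (-lapMat V a x) := by
    rw [hPdef]
    exact Finset.sum_congr rfl (fun a _ => by rw [lapMat_symm])
  have hPQ : P + Qs ≤ 2 * d := by
    have hsplit : ∑ a ∈ Finset.univ.erase x, (-lapMat V a x)
        = Qs + ∑ a ∈ S.erase x, (-lapMat V a x) := (Finset.sum_sdiff hsubset).symm
    have hbound : ∑ a ∈ Finset.univ.erase x, (-lapMat V a x) ≤ 2 * d := by
      have h1 : ∀ a ∈ Finset.univ.erase x, -lapMat V a x = -lapMat V x a :=
        fun a _ => by rw [lapMat_symm]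
      rw [Finset.sum_congr rfl h1]
      exact sum_neg_lapMat_le x _ (Finset.notMem_erase x _)
    omega
  -- main estimate on the off-diagonal part
  set E : ℤ := ∑ a ∈ Finset.univ.erase x, w a * (-lapMat V a x) with hEdef
  have hE : ∑ a ∈ Finset.univ.erase x, w a * lapMat V a x = -E := by
    rw [hEdef, ← Finset.sum_neg_distrib]
    exact Finset.sum_congr rfl (fun a _ => by ring)
  have hEbound : E ≤ m * P + (m - 1) * Qs := by
    have hsplit : E = (∑ a ∈ (Finset.univ.erase x) \ (S.erase x), w a * (-lapMat V a x))
        + ∑ a ∈ S.erase x, w a * (-lapMat V a x) := by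
      rw [hEdef, ← Finset.sum_sdiff hsubset]
    have h1 : ∑ a ∈ S.erase x, w a * (-lapMat V a x)
        = ∑ a ∈ S.erase x, m * (-lapMat V a x) := by
      apply Finset.sum_congr rfl
      intro a ha
      have : w a = m := (Finset.mem_filter.mp (Finset.mem_of_mem_erase ha)).2
      rw [this]
    have h2 : ∑ a ∈ (Finset.univ.erase x) \ (S.erase x), w a * (-lapMat V a x)
        ≤ ∑ a ∈ (Finset.univ.erase x) \ (S.erase x), (m - 1) * (-lapMat V a x) := by
      apply Finset.sum_le_sum
      intro a ha
      have hax : a ≠ x := (Finset.mem_erase.mp (Finset.mem_sdiff.mp ha).1).1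
      have haS : a ∉ S := by
        intro hc
        exact (Finset.mem_sdiff.mp ha).2 (Finset.mem_erase.mpr ⟨hax, hc⟩)
      have hwa : w a ≤ m - 1 := by
        have h3 : w a ≠ m := fun hc => haS (Finset.mem_filter.mpr ⟨Finset.mem_univ a, hc⟩)
        have := hmw a
        omega
      have hlap : 0 ≤ -lapMat V a x := by
        have := lapMat_offdiag_nonpos (V := V) hax
        omega
      exact mul_le_mul_of_nonneg_right hwa hlap
    have h4 : ∑ a ∈ S.erase x, m * (-lapMat V a x) = m * P := by
      rw [hPalt, Finset.mul_sum]
    have h5 : ∑ a ∈ (Finset.univ.erase x) \ (S.erase x), (m - 1) * (-lapMat V a x)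
        = (m - 1) * Qs := by
      rw [hQdef, Finset.mul_sum]
    omega
  have hdiagsplit : ∑ a, w a * lapMat V a x
      = w x * lapMat V x x + ∑ a ∈ Finset.univ.erase x, w a * lapMat V a x :=
    (Finset.add_sum_erase _ _ (Finset.mem_univ x)).symm
  have hdiag : w x * lapMat V x x = m * (2 * d) := by rw [hwx, lapMat_diag]
  have hmul : (m - 1) * Qs ≤ (m - 1) * (2 * d - P) :=
    mul_le_mul_of_nonneg_left (by omega) (by omega)
  linarith [hsx, hdiagsplit, hdiag, hE, hEbound, hmul, hP]

lemma key_stab {η ξ : {x // x ∈ V} → ℤ} {m : {x // x ∈ V} → ℤ} {l : List {x // x ∈ V}}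
    (hη : NoFSC V η) (hs : StableI V η) (hm : ∀ a, 0 ≤ m a)
    (hLS : LSI V (fun b => η b + ∑ a, m a * lapMat V a b) l ξ) (hξ : StableI V ξ) :
    ξ = η ∧ ∀ a, cnt l a = m a := by
  have hst : StableI V (fun b => (fun b => η b + ∑ a, m a * lapMat V a b) b
      - ∑ a, m a * lapMat V a b) := by
    intro b
    have h1 := hs b
    show η b + (∑ a, m a * lapMat V a b) - (∑ a, m a * lapMat V a b) ≤ 2 * d
    omega
  have hcnt := LSI_LAP hm hst hLS
  set w : {x // x ∈ V} → ℤ := fun a => m a - cnt l a with hwdef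
  have hw : ∀ a, 0 ≤ w a := fun a => by have := hcnt a; simp only [hwdef]; omega
  have hξw : ∀ b, ξ b = η b + ∑ a, w a * lapMat V a b := by
    intro b
    have h1 := LSI_count hLS b
    have h2 : ∑ a, w a * lapMat V a b
        = (∑ a, m a * lapMat V a b) - ∑ a, cnt l a * lapMat V a b := by
      have : ∀ a, w a * lapMat V a b = m a * lapMat V a b - cnt l a * lapMat V a b := by
        intro a; simp only [hwdef]; ring
      rw [Finset.sum_congr rfl (fun a _ => this a), Finset.sum_sub_distrib]
    omega
  by_cases hw0 : ∃ a, w a ≠ 0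
  · exfalso
    apply unstable_add hη hw hw0
    intro b
    show η b + ∑ a, w a * lapMat V a b ≤ 2 * d
    rw [← hξw b]
    exact hξ b
  · push_neg at hw0
    constructor
    · funext b
      have := hξw b
      have hz : ∑ a, w a * lapMat V a b = 0 := by
        apply Finset.sum_eq_zero
        intro a _
        rw [hw0 a, zero_mul]
      omega
    · intro a
      have := hw0 a
      simp only [hwdef] at this
      omega

lemma recurrent_unique (u : {x // x ∈ V} → ℤ) (hu1 : ∀ b, 1 ≤ u b)
    (hu2 : ∀ a, (1 : ℤ) ≤ ∑ b, lapMat V a b * u b)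
    {η η' : {x // x ∈ V} → ℤ} (hη : NoFSC V η) (hsη : StableI V η)
    (hη' : NoFSC V η') (hsη' : StableI V η') {k : {x // x ∈ V} → ℤ}
    (hk : ∀ b, η b - η' b = ∑ a, k a * lapMat V a b) : η = η' := by
  set kp : {x // x ∈ V} → ℤ := fun a => max (k a) 0 with hkpdef
  set kn : {x // x ∈ V} → ℤ := fun a => max (-k a) 0 with hkndef
  have hkp : ∀ a, 0 ≤ kp a := fun a => le_max_right _ _
  have hkn : ∀ a, 0 ≤ kn a := fun a => le_max_right _ _
  have hsum : ∀ b, (fun b => η b + ∑ a, kn a * lapMat V a b) b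
      = (fun b => η' b + ∑ a, kp a * lapMat V a b) b := by
    intro b
    show η b + ∑ a, kn a * lapMat V a b = η' b + ∑ a, kp a * lapMat V a b
    have h1 := hk b
    have h2 : ∑ a, kp a * lapMat V a b
        = (∑ a, k a * lapMat V a b) + ∑ a, kn a * lapMat V a b := by
      rw [← Finset.sum_add_distrib]
      apply Finset.sum_congr rfl
      intro a _
      have : kp a = k a + kn a := by simp only [hkpdef, hkndef]; omega
      rw [this]; ring
    omega
  obtain ⟨l, ξ, hl, hst⟩ := LSI_exists_stable u hu1 hu2
    (fun b => η b + ∑ a, kn a * lapMat V a b)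
  have hl' : LSI V (fun b => η' b + ∑ a, kp a * lapMat V a b) l ξ := by
    rwa [← funext hsum]
  obtain ⟨h1, -⟩ := key_stab hη hsη hkn hl hst
  obtain ⟨h2, -⟩ := key_stab hη' hsη' hkp hl' hst
  rw [← h1, ← h2]

lemma exists_recurrent_rep (hd : 1 ≤ d) (u : {x // x ∈ V} → ℤ) (hu1 : ∀ b, 1 ≤ u b)
    (hu2 : ∀ a, (2 * d : ℤ) ≤ ∑ b, lapMat V a b * u b)
    [hne : Nonempty {x // x ∈ V}] (ζ : {x // x ∈ V} → ℤ) :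
    ∃ (ξ k : {x // x ∈ V} → ℤ), NoFSC V ξ ∧ (∀ a, 1 ≤ ξ a) ∧ StableI V ξ ∧
      ∀ b, ξ b = ζ b + ∑ a, k a * lapMat V a b := by
  have hu2' : ∀ a, (1 : ℤ) ≤ ∑ b, lapMat V a b * u b := by
    intro a
    have := hu2 a
    have : (1 : ℤ) ≤ 2 * d := by omega
    omega
  set t : ℤ := max 0 (Finset.univ.sup' Finset.univ_nonempty (fun a => 2 * d + 1 - ζ a))
    with htdef
  have ht0 : 0 ≤ t := le_max_left _ _
  have htζ : ∀ a, 2 * d + 1 - ζ a ≤ t := fun a =>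
    le_trans (Finset.le_sup' (fun a => 2 * d + 1 - ζ a) (Finset.mem_univ a)) (le_max_right _ _)
  have hbig : ∀ b, (2 * d : ℤ) < ζ b + ∑ a, (t * u a) * lapMat V a b := by
    intro b
    have hR : (1 : ℤ) ≤ ∑ a, u a * lapMat V a b := by
      have h1 : ∑ a, u a * lapMat V a b = ∑ a, lapMat V b a * u a := by
        apply Finset.sum_congr rfl
        intro a _
        rw [lapMat_symm]; ring
      rw [h1]
      exact hu2' b
    have h2 : ∑ a, (t * u a) * lapMat V a b = t * ∑ a, u a * lapMat V a b := by
      rw [Finset.mul_sum]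
      apply Finset.sum_congr rfl
      intro a _; ring
    have h3 : t * 1 ≤ t * ∑ a, u a * lapMat V a b := mul_le_mul_of_nonneg_left hR ht0
    have h4 := htζ b
    omega
  obtain ⟨l, ξ, hl, hst⟩ := LSI_exists_stable u hu1 hu2'
    (fun b => ζ b + ∑ a, (t * u a) * lapMat V a b)
  have hζ'1 : ∀ b, (1:ℤ) ≤ ζ b + ∑ a, (t * u a) * lapMat V a b := by
    intro b; have := hbig b; omega
  refine ⟨ξ, fun a => t * u a - cnt l a, nofsc_LSI hl (nofsc_big hbig), ?_, hst, ?_⟩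
  · exact LSI_lb le_rfl hl hζ'1
  · intro b
    show ξ b = ζ b + ∑ a, (t * u a - cnt l a) * lapMat V a b
    have h1 := LSI_count hl b
    have h2 : ∑ a, (t * u a - cnt l a) * lapMat V a b
        = (∑ a, (t * u a) * lapMat V a b) - ∑ a, cnt l a * lapMat V a b := by
      rw [← Finset.sum_sub_distrib]
      apply Finset.sum_congr rfl
      intro a _; ring
    omega

end Unstable

section DetNonneg
variable {d : ℕ}

lemma lapMat_det_nonneg (V : Finset (Site d)) : 0 ≤ (lapMat V).det := by
  set Mr : Matrix {x // x ∈ V} {x // x ∈ V} ℝ := (lapMat V).map (Int.cast : ℤ → ℝ) with hMr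
  set A : {x // x ∈ V} → {x // x ∈ V} → ℝ := fun a b => if adjacent a.1 b.1 then 1 else 0
    with hAdef
  have hA0 : ∀ a b, 0 ≤ A a b := by intro a b; rw [hAdef]; dsimp only; split <;> norm_num
  have hAsymm : ∀ a b, A a b = A b a := by
    intro a b
    rw [hAdef]
    dsimp only
    by_cases h : adjacent a.1 b.1
    · rw [if_pos h, if_pos (adj_symm h)]
    · rw [if_neg h, if_neg (fun hc => h (adj_symm hc))]
  have hMA : ∀ a b, Mr a b = (if a = b then (2*(d:ℝ)) else 0) - A a b := by
    intro a b
    rw [hMr, hAdef]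
    simp only [Matrix.map_apply]
    by_cases hab : a = b
    · subst hab
      rw [if_pos rfl, lapMat_diag]
      have : ¬ adjacent a.1 a.1 := not_adj_self a.1
      rw [if_neg this]
      push_cast
      ring
    · rw [if_neg hab]
      have hab' : a.1 ≠ b.1 := fun hc => hab (Subtype.ext hc)
      rw [lapMat_apply, lap_offdiag hab']
      by_cases h : adjacent a.1 b.1
      · rw [if_pos h, if_pos h]; norm_num
      · rw [if_neg h, if_neg h]; norm_num
  set deg : {x // x ∈ V} → ℝ := fun a => ∑ b, A a b with hdegdef
  have hdeg : ∀ a, deg a ≤ 2 * d := by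
    intro a
    have hsplit : deg a = A a a + ∑ b ∈ Finset.univ.erase a, A a b :=
      (Finset.add_sum_erase _ _ (Finset.mem_univ a)).symm
    have hAaa : A a a = 0 := by
      rw [hAdef]; dsimp only; rw [if_neg (not_adj_self a.1)]
    have h1 : ∀ b ∈ Finset.univ.erase a, A a b = ((-lapMat V a b : ℤ) : ℝ) := by
      intro b hb
      have hab : a ≠ b := fun hc => (Finset.mem_erase.mp hb).1 hc.symm
      have hab' : a.1 ≠ b.1 := fun hc => hab (Subtype.ext hc)
      rw [hAdef]
      dsimp only
      rw [lapMat_apply, lap_offdiag hab']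
      by_cases h : adjacent a.1 b.1
      · rw [if_pos h, if_pos h]; norm_num
      · rw [if_neg h, if_neg h]; norm_num
    have h2 : ∑ b ∈ Finset.univ.erase a, A a b
        = ((∑ b ∈ Finset.univ.erase a, (-lapMat V a b) : ℤ) : ℝ) := by
      rw [Finset.sum_congr rfl h1]
      push_cast
      rfl
    have h3 := sum_neg_lapMat_le a (Finset.univ.erase a) (Finset.notMem_erase a _)
    have h4 : ((∑ b ∈ Finset.univ.erase a, (-lapMat V a b) : ℤ) : ℝ) ≤ ((2 * (d:ℤ) : ℤ) : ℝ) :=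
      Int.cast_le.mpr h3
    rw [hsplit, hAaa, h2, zero_add]
    exact_mod_cast h4
  -- the quadratic form is nonnegative
  have hquad : ∀ x : {x // x ∈ V} → ℝ, 0 ≤ ∑ a, x a * ∑ b, Mr a b * x b := by
    intro x
    set S2 : ℝ := ∑ a, (x a)^2 with hS2
    set DA : ℝ := ∑ a, ∑ b, A a b * (x a * x b) with hDA
    set Ddeg : ℝ := ∑ a, deg a * (x a)^2 with hDdeg
    have hQ1 : ∑ a, x a * ∑ b, Mr a b * x b = 2 * d * S2 - DA := by
      have hinner : ∀ a, x a * ∑ b, Mr a b * x b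
          = 2 * d * (x a)^2 - ∑ b, A a b * (x a * x b) := by
        intro a
        have h5 : ∀ b, Mr a b * x b = (if a = b then (2*(d:ℝ)) * x b else 0) - A a b * x b := by
          intro b
          rw [hMA a b]
          split <;> ring
        rw [Finset.sum_congr rfl (fun b _ => h5 b), Finset.sum_sub_distrib,
          Finset.sum_ite_eq Finset.univ a (fun b => (2*(d:ℝ)) * x b), if_pos (Finset.mem_univ a)]
        rw [mul_sub]
        have h6 : x a * ∑ b, A a b * x b = ∑ b, A a b * (x a * x b) := by
          rw [Finset.mul_sum]
          exact Finset.sum_congr rfl (fun b _ => by ring)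
        rw [h6]
        ring
      rw [Finset.sum_congr rfl (fun a _ => hinner a), Finset.sum_sub_distrib, hDA, hS2,
        Finset.mul_sum]
    have hDdeg1 : ∑ a, ∑ b, A a b * (x a)^2 = Ddeg := by
      rw [hDdeg]
      apply Finset.sum_congr rfl
      intro a _
      rw [hdegdef, ← Finset.sum_mul]
    have hDdeg2 : ∑ a, ∑ b, A a b * (x b)^2 = Ddeg := by
      rw [Finset.sum_comm]
      rw [← hDdeg1]
      apply Finset.sum_congr rfl
      intro b _
      apply Finset.sum_congr rfl
      intro a _
      rw [hAsymm]
    set E1 : ℝ := ∑ a, ∑ b, A a b * (x a - x b)^2 with hE1def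
    have hE10 : 0 ≤ E1 :=
      Finset.sum_nonneg fun a _ => Finset.sum_nonneg fun b _ =>
        mul_nonneg (hA0 a b) (sq_nonneg _)
    have hE1 : E1 = 2 * Ddeg - 2 * DA := by
      have hinner1 : ∀ a, ∑ b, A a b * (x a - x b)^2
          = (∑ b, A a b * (x a)^2) + (∑ b, A a b * (x b)^2) - 2 * ∑ b, A a b * (x a * x b) := by
        intro a
        rw [Finset.mul_sum, ← Finset.sum_add_distrib, ← Finset.sum_sub_distrib]
        apply Finset.sum_congr rfl
        intro b _
        ring
      rw [hE1def, Finset.sum_congr rfl (fun a _ => hinner1 a), Finset.sum_sub_distrib,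
        Finset.sum_add_distrib, hDdeg1, hDdeg2, ← Finset.mul_sum, ← hDA]
      ring
    set E2 : ℝ := ∑ a, (2 * (2 * d) - 2 * deg a) * (x a)^2 with hE2def
    have hE20 : 0 ≤ E2 := Finset.sum_nonneg fun a _ =>
      mul_nonneg (by have := hdeg a; linarith) (sq_nonneg _)
    have hE2 : E2 = 2 * (2 * d) * S2 - 2 * Ddeg := by
      rw [hE2def, hS2, hDdeg]
      rw [Finset.mul_sum, Finset.mul_sum, ← Finset.sum_sub_distrib]
      apply Finset.sum_congr rfl
      intro a _
      ring
    linarith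
  have hherm : Mr.IsHermitian := by
    ext a b
    rw [hMr]
    simp only [Matrix.conjTranspose_apply, Matrix.map_apply, star_trivial]
    exact_mod_cast lapMat_symm b a
  have hps : Mr.PosSemidef := by
    refine Matrix.PosSemidef.of_dotProduct_mulVec_nonneg hherm fun x => ?_
    simpa [dotProduct, Matrix.mulVec] using hquad x
  have hsq : 0 ≤ Mr.det := hps.det_nonneg
  have hcast : Mr.det = (((lapMat V).det : ℤ) : ℝ) := by
    rw [hMr]
    have h8 := (Int.castRingHom ℝ).map_det (lapMat V)
    have h9 : (Int.castRingHom ℝ).mapMatrix (lapMat V) = (lapMat V).map (Int.cast : ℤ → ℝ) := rfl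
    rw [h9] at h8
    exact h8.symm
  have : (0:ℝ) ≤ (((lapMat V).det : ℤ) : ℝ) := by
    rw [← hcast]
    exact hsq
  exact_mod_cast this

end DetNonneg

section IndexDet

lemma index_range_eq_natAbs_det {ι : Type*} [Fintype ι] [DecidableEq ι]
    (f : (ι → ℤ) →ₗ[ℤ] (ι → ℤ)) (hf : Function.Injective f) :
    (LinearMap.range f).toAddSubgroup.index = (LinearMap.det f).natAbs := by
  set N := LinearMap.range f with hNdef
  obtain ⟨n, snf⟩ := N.smithNormalForm (Pi.basisFun ℤ ι)
  set e0 : (ι → ℤ) ≃ₗ[ℤ] N := LinearEquiv.ofInjective f hf with he0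
  have hcard : Fintype.card ι = n := by
    have b1 : Module.Basis ι ℤ N := (Pi.basisFun ℤ ι).map e0
    have e := b1.indexEquiv snf.bN
    simpa using Fintype.card_congr e
  -- index side
  have hidx : N.toAddSubgroup.index = ∏ i : Fin n, (snf.a i).natAbs := by
    rw [snf.toAddSubgroup_index_eq_ite, if_pos hcard.symm]
    apply Finset.prod_congr rfl
    intro i _
    rw [Ideal.span_singleton_toAddSubgroup_eq_zmultiples, Int.index_zmultiples]
  -- determinant side
  set σ : Fin n ≃ ι := Equiv.ofBijective snf.f
    ((Fintype.bijective_iff_injective_and_card snf.f).mpr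
      ⟨snf.f.injective, by rw [Fintype.card_fin, hcard]⟩) with hσ
  set bN' : Module.Basis ι ℤ N := snf.bN.reindex σ with hbN'def
  set e' : (ι → ℤ) ≃ₗ[ℤ] N := snf.bM.equiv bN' (Equiv.refl ι) with he'def
  set g : (ι → ℤ) →ₗ[ℤ] (ι → ℤ) := N.subtype ∘ₗ (e' : (ι → ℤ) →ₗ[ℤ] N) with hgdef
  have hfg : f = g ∘ₗ ((e0.trans e'.symm : (ι → ℤ) ≃ₗ[ℤ] (ι → ℤ)) :
      (ι → ℤ) →ₗ[ℤ] (ι → ℤ)) := by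
    ext v j
    simp only [LinearMap.comp_apply, hgdef, LinearEquiv.coe_coe, LinearEquiv.trans_apply,
      LinearMap.comp_apply, Submodule.subtype_apply, LinearEquiv.apply_symm_apply]
    rw [he0, LinearEquiv.ofInjective_apply]
  have hdet : (LinearMap.det f).natAbs = (LinearMap.det g).natAbs := by
    rw [hfg, LinearMap.det_comp, Int.natAbs_mul]
    have hu : IsUnit (LinearMap.det ((e0.trans e'.symm : (ι → ℤ) ≃ₗ[ℤ] (ι → ℤ)) :
        (ι → ℤ) →ₗ[ℤ] (ι → ℤ))) := LinearEquiv.isUnit_det' _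
    rcases Int.isUnit_iff.mp hu with h | h <;> rw [h] <;> simp
  have hgmat : LinearMap.toMatrix snf.bM snf.bM g
      = Matrix.diagonal (fun j => snf.a (σ.symm j)) := by
    ext i j
    rw [LinearMap.toMatrix_apply]
    have h1 : g (snf.bM j) = (snf.bN (σ.symm j) : ι → ℤ) := by
      simp only [hgdef, LinearMap.comp_apply, Submodule.subtype_apply, LinearEquiv.coe_coe,
        he'def, Module.Basis.equiv_apply, Equiv.refl_apply, hbN'def, Module.Basis.reindex_apply]
    rw [h1, snf.snf (σ.symm j)]
    have h2 : σ (σ.symm j) = j := Equiv.apply_symm_apply σ j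
    have h4 : ∀ i, σ i = snf.f i := fun i => by rw [hσ]; rfl
    have h3 : snf.f (σ.symm j) = j := by rw [← h4]; exact h2
    rw [h3, map_smul, Module.Basis.repr_self]
    simp only [Finsupp.smul_single, smul_eq_mul, mul_one, Finsupp.single_apply,
      Matrix.diagonal_apply]
    by_cases hij : i = j
    · simp [hij]
    · simp [hij, Ne.symm hij]
  have hdetg : LinearMap.det g = ∏ i : Fin n, snf.a i := by
    rw [← LinearMap.det_toMatrix snf.bM, hgmat, Matrix.det_diagonal]
    exact Equiv.prod_comp σ.symm snf.a
  rw [hidx, hdet, hdetg]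
  exact (map_prod Int.natAbsHom snf.a Finset.univ).symm

end IndexDet

/-- the number of recurrent configurations of the Abelian sandpile model on a
finite set `V ⊂ ℤ^d` equals `det (Δ_V)`. -/
theorem card_recurrent_eq_det {d : ℕ} (V : Finset (Site d)) :
    (Nat.card {η : {x // x ∈ V} → Fin (2 * d) // RecurrentOn V η} : ℤ)
      = (lapMat V).det := by
  rcases V.eq_empty_or_nonempty with rfl | hV
  · -- empty volume
    haveI hie : IsEmpty {x // x ∈ (∅ : Finset (Site d))} :=
      ⟨fun x => absurd x.2 (Finset.notMem_empty x.1)⟩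
    rw [Matrix.det_isEmpty]
    have h1 : ∀ η : {x // x ∈ (∅ : Finset (Site d))} → Fin (2*d), RecurrentOn ∅ η := by
      intro η S hS
      obtain ⟨x, _⟩ := hS
      exact isEmptyElim x
    haveI : Unique {η : {x // x ∈ (∅ : Finset (Site d))} → Fin (2*d) // RecurrentOn ∅ η} :=
      { default := ⟨fun a => isEmptyElim a, h1 _⟩
        uniq := fun η => Subtype.ext (funext fun a => isEmptyElim a) }
    rw [Nat.card_unique]
    norm_num
  rcases Nat.eq_zero_or_pos d with rfl | hd
  · -- d = 0, V nonempty
    obtain ⟨x₀, hx₀⟩ := hV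
    haveI hie : IsEmpty ({x // x ∈ V} → Fin (2*0)) := ⟨fun f => (f ⟨x₀, hx₀⟩).elim0⟩
    haveI : IsEmpty {η : {x // x ∈ V} → Fin (2*0) // RecurrentOn V η} :=
      ⟨fun s => IsEmpty.elim hie s.1⟩
    haveI : Unique {x // x ∈ V} :=
      { default := ⟨x₀, hx₀⟩
        uniq := fun y => Subtype.ext (funext fun i => i.elim0) }
    rw [Matrix.det_unique, lapMat_diag]
    simp
  · -- main case
    haveI hne : Nonempty {x // x ∈ V} := hV.to_subtype
    obtain ⟨u₀, hu₀1, hu₀2⟩ := exists_u V hV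
    set u : {x // x ∈ V} → ℤ := fun b => u₀ b.1 with hudef
    have hu1 : ∀ b, 1 ≤ u b := fun b => hu₀1 b.1 b.2
    have hu2 : ∀ a : {x // x ∈ V}, (2*d : ℤ) ≤ ∑ b, lapMat V a b * u b := by
      intro a
      have h1 := hu₀2 a.1 a.2
      have h2 : ∑ b : {x // x ∈ V}, lapMat V a b * u b
          = ∑ y ∈ V, lap d a.1 y * u₀ y := Finset.sum_coe_sort V (fun y => lap d a.1 y * u₀ y)
      rw [h2]
      exact h1
    have hu2' : ∀ a, (1:ℤ) ≤ ∑ b, lapMat V a b * u b := by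
      intro a
      have := hu2 a
      omega
    set f : ({x // x ∈ V} → ℤ) →ₗ[ℤ] ({x // x ∈ V} → ℤ) := Matrix.toLin' (lapMat V) with hfdef
    have hmv : ∀ (k : {x // x ∈ V} → ℤ) (b), f k b = ∑ a, k a * lapMat V a b := by
      intro k b
      rw [hfdef]
      rw [Matrix.toLin'_apply]
      show dotProduct (fun a => lapMat V b a) k = _
      rw [dotProduct]
      exact Finset.sum_congr rfl (fun a _ => by rw [lapMat_symm]; ring)
    have hd1 : 1 ≤ d := hd
    -- injectivity of the toppling matrix
    have hinj : Function.Injective f := by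
      have hker : ∀ v, f v = 0 → v = 0 := by
        intro v hv
        obtain ⟨η, k₁, hηN, hη1, hηS, -⟩ := exists_recurrent_rep hd1 u hu1 hu2 (fun _ => 0)
        set vp : {x // x ∈ V} → ℤ := fun a => max (v a) 0 with hvp
        set vn : {x // x ∈ V} → ℤ := fun a => max (-v a) 0 with hvn
        have hvp0 : ∀ a, 0 ≤ vp a := fun a => le_max_right _ _
        have hvn0 : ∀ a, 0 ≤ vn a := fun a => le_max_right _ _
        have hsum0 : ∀ b, ∑ a, v a * lapMat V a b = 0 := by
          intro b
          have h3 := congrFun hv b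
          rw [hmv] at h3
          exact h3
        have heq : ∀ b, (fun b => η b + ∑ a, vp a * lapMat V a b) b
            = (fun b => η b + ∑ a, vn a * lapMat V a b) b := by
          intro b
          show η b + ∑ a, vp a * lapMat V a b = η b + ∑ a, vn a * lapMat V a b
          have h4 : ∑ a, vp a * lapMat V a b
              = (∑ a, v a * lapMat V a b) + ∑ a, vn a * lapMat V a b := by
            rw [← Finset.sum_add_distrib]
            apply Finset.sum_congr rfl
            intro a _
            have : vp a = v a + vn a := by simp only [hvp, hvn]; omega
            rw [this]; ring
          rw [h4, hsum0 b, zero_add]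
        obtain ⟨l, ξ, hl, hst⟩ := LSI_exists_stable u hu1 hu2'
          (fun b => η b + ∑ a, vp a * lapMat V a b)
        obtain ⟨-, hc1⟩ := key_stab hηN hηS hvp0 hl hst
        have hl' : LSI V (fun b => η b + ∑ a, vn a * lapMat V a b) l ξ := by
          rwa [← funext heq]
        obtain ⟨-, hc2⟩ := key_stab hηN hηS hvn0 hl' hst
        funext a
        have h5 := hc1 a
        have h6 := hc2 a
        simp only [hvp, hvn] at h5 h6
        show v a = 0
        omega
      intro v w hvw
      have := hker (v - w) (by rw [map_sub, hvw, sub_self])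
      exact sub_eq_zero.mp this
    set H : AddSubgroup ({x // x ∈ V} → ℤ) := (LinearMap.range f).toAddSubgroup with hHdef
    have hmemH : ∀ w : {x // x ∈ V} → ℤ,
        w ∈ H ↔ ∃ k : {x // x ∈ V} → ℤ, ∀ b, w b = ∑ a, k a * lapMat V a b := by
      intro w
      rw [hHdef, Submodule.mem_toAddSubgroup, LinearMap.mem_range]
      constructor
      · rintro ⟨k, hk⟩
        exact ⟨k, fun b => by rw [← hk, hmv]⟩
      · rintro ⟨k, hk⟩
        exact ⟨k, funext fun b => by rw [hmv, ← hk]⟩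
    set F : {η : {x // x ∈ V} → Fin (2 * d) // RecurrentOn V η} → (({x // x ∈ V} → ℤ) ⧸ H) :=
      fun η => QuotientAddGroup.mk (heightOf η.1) with hFdef
    have hstable_h : ∀ (η : {x // x ∈ V} → Fin (2 * d)), StableI V (heightOf η) := by
      intro η a
      have := (η a).isLt
      show ((η a : ℕ) : ℤ) + 1 ≤ 2 * d
      omega
    have hbij : Function.Bijective F := by
      constructor
      · rintro ⟨η, hη⟩ ⟨η', hη'⟩ h
        rw [hFdef] at h
        dsimp only at h
        rw [QuotientAddGroup.eq] at h
        obtain ⟨k, hk⟩ := (hmemH _).mp h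
        have hk' : ∀ b, heightOf η' b - heightOf η b = ∑ a, k a * lapMat V a b := by
          intro b
          have := hk b
          simpa [sub_eq_neg_add] using this
        have hNη : NoFSC V (heightOf η) := hη
        have hNη' : NoFSC V (heightOf η') := hη'
        have huniq := recurrent_unique u hu1 hu2' hNη' (hstable_h η') hNη (hstable_h η) hk'
        apply Subtype.ext
        funext a
        show η a = η' a
        have h7 := congrFun huniq a
        simp only [heightOf] at h7
        exact Fin.ext (by omega)
      · intro q
        obtain ⟨ζ, rfl⟩ := QuotientAddGroup.mk_surjective q
        obtain ⟨ξ, k, hξN, hξ1, hξS, hξζ⟩ := exists_recurrent_rep hd1 u hu1 hu2 ζ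
        have hbound : ∀ a, (ξ a - 1).toNat < 2 * d := by
          intro a
          have h8 := hξ1 a
          have h9 := hξS a
          omega
        set η : {x // x ∈ V} → Fin (2 * d) := fun a => ⟨(ξ a - 1).toNat, hbound a⟩ with hηdef
        have hh : heightOf η = ξ := by
          funext a
          show (((ξ a - 1).toNat : ℕ) : ℤ) + 1 = ξ a
          have := hξ1 a
          omega
        have hrec : RecurrentOn V η := by
          have : NoFSC V (heightOf η) := hh ▸ hξN
          exact this
        refine ⟨⟨η, hrec⟩, ?_⟩
        rw [hFdef]
        dsimp only
        rw [QuotientAddGroup.eq]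
        apply (hmemH _).mpr
        refine ⟨fun a => -k a, ?_⟩
        intro b
        have h10 := hξζ b
        show -(heightOf η b) + ζ b = ∑ a, (fun a => -k a) a * lapMat V a b
        have h11 : ∑ a, (fun a => -k a) a * lapMat V a b = -∑ a, k a * lapMat V a b := by
          rw [← Finset.sum_neg_distrib]
          apply Finset.sum_congr rfl
          intro a _
          show (-k a) * lapMat V a b = -(k a * lapMat V a b)
          ring
        rw [congrFun hh b, h11]
        omega
    have hcard : Nat.card {η : {x // x ∈ V} → Fin (2 * d) // RecurrentOn V η} = H.index := by
      rw [Nat.card_eq_of_bijective F hbij]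
      exact (AddSubgroup.index_eq_card H).symm
    have hidx : H.index = (LinearMap.det f).natAbs := index_range_eq_natAbs_det f hinj
    have hdetf : LinearMap.det f = (lapMat V).det := by
      rw [hfdef]
      exact LinearMap.det_toLin' _
    have hnn := lapMat_det_nonneg V
    rw [hcard, hidx, hdetf]
    exact Int.natAbs_of_nonneg hnn
end
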